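/- Let O be a discrete valuation ring with uniformizer λ and finite residue field of cardinality q, and let M₁, M₂ be finite O-modules. If |M₁[λ^n]| = |M₂[λ^n]|, then |M₁| ≡ |M₂| modulo q^n (i.e., the λ-adic valuations of |M₁| and |M₂| agree up to n, or both cardinalities are equal). -/

import Mathlib

section aux
variable {O : Type*} [CommRing O] [IsDomain O] [IsDiscreteValuationRing O]

/-- Cardinality of `O ⧸ (π^k)` is `q^k`. -/
lemma card_quot_span_pow (π : O) (hπ : Irreducible π) (k : ℕ) :
    Nat.card (O ⧸ (Ideal.span {π ^ k} : Ideal O)) =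
      Nat.card (O ⧸ (Ideal.span {π} : Ideal O)) ^ k := by
  induction k with
  | zero =>
      rw [pow_zero, pow_zero, Ideal.span_singleton_one,
        ← Submodule.cardQuot_apply, Submodule.cardQuot_top]
  | succ k ih =>
      have hle : (Ideal.span {π ^ (k+1)} : Ideal O) ≤ Ideal.span {π ^ k} :=
        Ideal.span_singleton_le_span_singleton.mpr (pow_dvd_pow π (Nat.le_succ k))
      have hmul := Submodule.card_quotient_mul_card_quotient
        (Ideal.span {π ^ k}) (Ideal.span {π ^ (k+1)}) hle
      set f := LinearMap.toSpanSingleton O (O ⧸ (Ideal.span {π ^ (k+1)} : Ideal O))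
        (Submodule.Quotient.mk (π ^ k)) with hf
      have hrange : LinearMap.range f =
          Submodule.map (Submodule.mkQ (Ideal.span {π ^ (k+1)}))
            (Ideal.span {π ^ k} : Ideal O) := by
        rw [← LinearMap.span_singleton_eq_range]
        show (Submodule.span O {Submodule.Quotient.mk (π ^ k)} : _) = _
        rw [show (Ideal.span {π ^ k} : Ideal O) = Submodule.span O {π ^ k} from rfl,
          Submodule.map_span, Set.image_singleton, Submodule.mkQ_apply]
      have hker : LinearMap.ker f = Ideal.span {π} := by
        ext a
        rw [LinearMap.mem_ker, hf, LinearMap.toSpanSingleton_apply,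
          ← Submodule.Quotient.mk_smul, Submodule.Quotient.mk_eq_zero,
          Ideal.mem_span_singleton, Ideal.mem_span_singleton, smul_eq_mul,
          pow_succ, mul_comm a (π ^ k), mul_dvd_mul_iff_left (pow_ne_zero k hπ.ne_zero)]
      have hcard : Nat.card (Submodule.map (Submodule.mkQ (Ideal.span {π ^ (k+1)}))
            (Ideal.span {π ^ k} : Ideal O)) =
          Nat.card (O ⧸ (Ideal.span {π} : Ideal O)) := by
        rw [← hrange, ← Nat.card_congr (f.quotKerEquivRange).toEquiv, hker]
      rw [← hmul, hcard, ih, pow_succ, mul_comm]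

lemma dvr_infinite (π : O) (hπ : Irreducible π) : Infinite O := by
  refine Infinite.of_injective (fun k : ℕ => π ^ k) (fun i j hij => ?_)
  have hij' : π ^ i = π ^ j := hij
  have h1 : π ^ i ∣ π ^ j := hij' ▸ dvd_rfl
  have h2 : π ^ j ∣ π ^ i := hij' ▸ dvd_rfl
  exact le_antisymm ((pow_dvd_pow_iff hπ.ne_zero hπ.not_isUnit).mp h1)
    ((pow_dvd_pow_iff hπ.ne_zero hπ.not_isUnit).mp h2)

/-- Key lemma: if some element is not killed by `π^n`, then `q^n` divides the
cardinality of the `π^n`-torsion submodule. -/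
lemma qpow_dvd_card_torsionBy (π : O) (hπ : Irreducible π)
    (M : Type*) [AddCommGroup M] [Module O M] [Finite M] (n : ℕ)
    (hx : ∃ x : M, π ^ n • x ≠ 0) :
    Nat.card (O ⧸ (Ideal.span {π} : Ideal O)) ^ n ∣
      Nat.card (Submodule.torsionBy O M (π ^ n)) := by
  obtain ⟨x, hxn⟩ := hx
  have hinf : Infinite O := dvr_infinite π hπ
  -- the torsion ideal of x is nonzero
  have htb : Ideal.torsionOf O M x ≠ ⊥ := by
    intro hbot
    have : Function.Injective (LinearMap.toSpanSingleton O M x) := by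
      rw [← LinearMap.ker_eq_bot]
      exact hbot
    exact not_injective_infinite_finite _ this
  obtain ⟨m, hm⟩ := IsDiscreteValuationRing.ideal_eq_span_pow_irreducible htb hπ
  have hπmx : π ^ m • x = 0 := by
    have : π ^ m ∈ Ideal.torsionOf O M x := by
      rw [hm]; exact Ideal.mem_span_singleton_self _
    exact (Ideal.mem_torsionOf_iff x _).mp this
  have hnm : n < m := by
    by_contra hle
    push_neg at hle
    exact hxn ((Ideal.mem_torsionOf_iff x _).mp (hm ▸
      Ideal.mem_span_singleton.mpr (pow_dvd_pow π hle)))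
  set y : M := π ^ (m - n) • x with hy
  have hπny : π ^ n • y = 0 := by
    rw [hy, smul_smul, ← pow_add]
    rwa [Nat.add_sub_cancel' hnm.le]
  have hty : Ideal.torsionOf O M y = Ideal.span {π ^ n} := by
    apply le_antisymm
    · intro a ha
      rw [Ideal.mem_torsionOf_iff, hy, smul_smul] at ha
      have : a * π ^ (m - n) ∈ Ideal.torsionOf O M x :=
        (Ideal.mem_torsionOf_iff x _).mpr ha
      rw [hm, Ideal.mem_span_singleton] at this
      rw [Ideal.mem_span_singleton]
      obtain ⟨c, hc⟩ := this
      refine ⟨c, ?_⟩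
      have hpm : (π : O) ^ m = π ^ n * π ^ (m - n) := by
        rw [← pow_add]; congr 1; omega
      have hcancel : a * π ^ (m - n) = π ^ n * c * π ^ (m - n) := by
        rw [hc, hpm]; ring
      exact mul_right_cancel₀ (pow_ne_zero _ hπ.ne_zero) hcancel
    · rw [Ideal.span_singleton_le_iff_mem, Ideal.mem_torsionOf_iff]
      exact hπny
  -- the span of y has cardinality q^n
  have hcardy : Nat.card (O ∙ y : Submodule O M) =
      Nat.card (O ⧸ (Ideal.span {π} : Ideal O)) ^ n := by
    rw [← Nat.card_congr (Ideal.quotTorsionOfEquivSpanSingleton O M y).toEquiv, hty,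
      card_quot_span_pow π hπ]
  -- span of y is contained in the torsion submodule
  have hle : (O ∙ y : Submodule O M) ≤ Submodule.torsionBy O M (π ^ n) := by
    rw [Submodule.span_singleton_le_iff_mem]
    exact hπny
  have hdvd : Nat.card (O ∙ y : Submodule O M) ∣
      Nat.card (Submodule.torsionBy O M (π ^ n)) :=
    AddSubgroup.card_dvd_of_le (H := (O ∙ y : Submodule O M).toAddSubgroup)
      (K := (Submodule.torsionBy O M (π ^ n)).toAddSubgroup) hle
  rwa [hcardy] at hdvd

lemma card_torsionBy_dvd_card (π : O)
    (M : Type*) [AddCommGroup M] [Module O M] [Finite M] (n : ℕ) :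
    Nat.card (Submodule.torsionBy O M (π ^ n)) ∣ Nat.card M :=
  AddSubgroup.card_addSubgroup_dvd_card (Submodule.torsionBy O M (π ^ n)).toAddSubgroup

lemma card_torsionBy_of_kills (π : O)
    (M : Type*) [AddCommGroup M] [Module O M] (n : ℕ)
    (hk : ∀ x : M, π ^ n • x = 0) :
    Nat.card (Submodule.torsionBy O M (π ^ n)) = Nat.card M := by
  have : Submodule.torsionBy O M (π ^ n) = ⊤ :=
    eq_top_iff.mpr fun x _ => hk x
  rw [this]
  exact Nat.card_congr Submodule.topEquiv.toEquiv

end aux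

/-- If `M₁, M₂` are finite modules over a DVR `O` with uniformizer `π`
and residue field of cardinality `q`, and `|M₁[π^n]| = |M₂[π^n]|`, then
`|M₁| ≡ |M₂| (mod q^n)`: either `π^n` kills both modules and `|M₁| = |M₂|`, or
`q^n` divides both cardinalities. -/
theorem stmt2 (O : Type*) [CommRing O] [IsDomain O] [IsDiscreteValuationRing O]
    (π : O) (hπ : Irreducible π) [Finite (O ⧸ Ideal.span {π})]
    (q : ℕ) (hq : q = Nat.card (O ⧸ Ideal.span {π}))
    (M₁ M₂ : Type*) [AddCommGroup M₁] [Module O M₁] [Finite M₁]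
    [AddCommGroup M₂] [Module O M₂] [Finite M₂] (n : ℕ)
    (h : Nat.card (Submodule.torsionBy O M₁ (π ^ n)) =
          Nat.card (Submodule.torsionBy O M₂ (π ^ n))) :
    Nat.card M₁ ≡ Nat.card M₂ [MOD q ^ n] ∧
      (((∀ x : M₁, π ^ n • x = 0) ∧ (∀ x : M₂, π ^ n • x = 0) ∧ Nat.card M₁ = Nat.card M₂) ∨
        (q ^ n ∣ Nat.card M₁ ∧ q ^ n ∣ Nat.card M₂)) := by
  subst hq
  by_cases h1 : ∀ x : M₁, π ^ n • x = 0
  · by_cases h2 : ∀ x : M₂, π ^ n • x = 0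
    · have heq : Nat.card M₁ = Nat.card M₂ := by
        rw [← card_torsionBy_of_kills π M₁ n h1, ← card_torsionBy_of_kills π M₂ n h2, h]
      exact ⟨heq ▸ Nat.ModEq.refl _, Or.inl ⟨h1, h2, heq⟩⟩
    · push_neg at h2
      have hd2t := qpow_dvd_card_torsionBy π hπ M₂ n h2
      have hd1 : Nat.card (O ⧸ Ideal.span {π}) ^ n ∣ Nat.card M₁ := by
        rw [← card_torsionBy_of_kills π M₁ n h1, h]; exact hd2t
      have hd2 : Nat.card (O ⧸ Ideal.span {π}) ^ n ∣ Nat.card M₂ :=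
        hd2t.trans (card_torsionBy_dvd_card π M₂ n)
      exact ⟨(Nat.modEq_zero_iff_dvd.mpr hd1).trans
        (Nat.modEq_zero_iff_dvd.mpr hd2).symm, Or.inr ⟨hd1, hd2⟩⟩
  · push_neg at h1
    have hd1t := qpow_dvd_card_torsionBy π hπ M₁ n h1
    have hd1 : Nat.card (O ⧸ Ideal.span {π}) ^ n ∣ Nat.card M₁ :=
      hd1t.trans (card_torsionBy_dvd_card π M₁ n)
    have hd2 : Nat.card (O ⧸ Ideal.span {π}) ^ n ∣ Nat.card M₂ := by
      by_cases h2 : ∀ x : M₂, π ^ n • x = 0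
      · rw [← card_torsionBy_of_kills π M₂ n h2, ← h]; exact hd1t
      · push_neg at h2
        exact (qpow_dvd_card_torsionBy π hπ M₂ n h2).trans (card_torsionBy_dvd_card π M₂ n)
    exact ⟨(Nat.modEq_zero_iff_dvd.mpr hd1).trans
      (Nat.modEq_zero_iff_dvd.mpr hd2).symm, Or.inr ⟨hd1, hd2⟩⟩
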